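/- There exist three elements of order 2 in SO(3) (rotations by angle π) that topologically generate SO(3), and this generating set is irredundant: no two of them topologically generate SO(3). Hence m(SO(3)) ≥ 3. -/

import Mathlib

/-- `SO(3)`: the subgroup of the (3×3 real) orthogonal group of elements of determinant 1. -/
def SO3 : Subgroup (Matrix.orthogonalGroup (Fin 3) ℝ) :=
  MonoidHom.ker
    (Matrix.detMonoidHom.comp (Submonoid.subtype (Matrix.orthogonalGroup (Fin 3) ℝ)))

/-- `X` topologically generates `G`. -/
def TopGen (G : Type*) [Group G] [TopologicalSpace G] (X : Finset G) : Prop :=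
  closure ((Subgroup.closure (X : Set G) : Subgroup G) : Set G) = Set.univ

/-- `X` is an irredundant (topologically) generating set of `G`. -/
def IrredGen (G : Type*) [Group G] [TopologicalSpace G] (X : Finset G) : Prop :=
  TopGen G X ∧ ∀ Y : Finset G, Y ⊂ X → ¬ TopGen G Y

/-- The supremum of sizes of finite irredundant topologically generating sets. -/
noncomputable def mRank (G : Type*) [Group G] [TopologicalSpace G] : ℕ∞ :=
  sSup {n : ℕ∞ | ∃ X : Finset G, IrredGen G X ∧ (X.card : ℕ∞) = n}

set_option linter.unreachableTactic false
set_option linter.unusedTactic false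
set_option linter.unusedVariables false

open Real Matrix
noncomputable section
abbrev M3 := Matrix (Fin 3) (Fin 3) ℝ

def rz (θ : ℝ) : M3 := !![cos θ, -sin θ, 0; sin θ, cos θ, 0; 0,0,1]
def ry (θ : ℝ) : M3 := !![cos θ, 0, sin θ; 0,1,0; -sin θ, 0, cos θ]
def matA : M3 := !![1,0,0; 0,-1,0; 0,0,-1]
def matB : M3 := !![cos 1, sin 1, 0; sin 1, -cos 1, 0; 0,0,-1]
def matC : M3 := !![cos 1, 0, sin 1; 0,-1,0; sin 1, 0, -cos 1]

lemma star_real (M : M3) : star M = Mᵀ := by ext i j; simp [Matrix.star_apply]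

lemma mem_orth_of (M : M3) (h : M * Mᵀ = 1) : M ∈ Matrix.orthogonalGroup (Fin 3) ℝ := by
  rw [Matrix.mem_orthogonalGroup_iff]; exact h

lemma rz_mem (θ : ℝ) : rz θ ∈ Matrix.orthogonalGroup (Fin 3) ℝ := by
  apply mem_orth_of
  have h : (rz θ)ᵀ = !![cos θ, sin θ, 0; -sin θ, cos θ, 0; 0,0,1] := by
    ext i j; fin_cases i <;> fin_cases j <;> simp [rz, Matrix.vecHead, Matrix.vecTail]
  rw [h, rz, Matrix.mul_fin_three, Matrix.one_fin_three]
  ext i j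
  fin_cases i <;> fin_cases j <;>
    simp [Matrix.vecHead, Matrix.vecTail] <;> nlinarith [sin_sq_add_cos_sq θ]

lemma ry_mem (θ : ℝ) : ry θ ∈ Matrix.orthogonalGroup (Fin 3) ℝ := by
  apply mem_orth_of
  have h : (ry θ)ᵀ = !![cos θ, 0, -sin θ; 0,1,0; sin θ, 0, cos θ] := by
    ext i j; fin_cases i <;> fin_cases j <;> simp [ry, Matrix.vecHead, Matrix.vecTail]
  rw [h, ry, Matrix.mul_fin_three, Matrix.one_fin_three]
  ext i j
  fin_cases i <;> fin_cases j <;>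
    simp [Matrix.vecHead, Matrix.vecTail] <;> nlinarith [sin_sq_add_cos_sq θ]

lemma matA_mem : matA ∈ Matrix.orthogonalGroup (Fin 3) ℝ := by
  apply mem_orth_of
  have h : matAᵀ = matA := by
    ext i j; fin_cases i <;> fin_cases j <;> simp [matA, Matrix.vecHead, Matrix.vecTail]
  rw [h, matA, Matrix.mul_fin_three, Matrix.one_fin_three]
  ext i j
  fin_cases i <;> fin_cases j <;> simp [Matrix.vecHead, Matrix.vecTail]

lemma matB_mem : matB ∈ Matrix.orthogonalGroup (Fin 3) ℝ := by
  apply mem_orth_of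
  have h : matBᵀ = matB := by
    ext i j; fin_cases i <;> fin_cases j <;> simp [matB, Matrix.vecHead, Matrix.vecTail]
  rw [h, matB, Matrix.mul_fin_three, Matrix.one_fin_three]
  ext i j
  fin_cases i <;> fin_cases j <;>
    simp [Matrix.vecHead, Matrix.vecTail] <;> nlinarith [sin_sq_add_cos_sq 1]

lemma matC_mem : matC ∈ Matrix.orthogonalGroup (Fin 3) ℝ := by
  apply mem_orth_of
  have h : matCᵀ = matC := by
    ext i j; fin_cases i <;> fin_cases j <;> simp [matC, Matrix.vecHead, Matrix.vecTail]
  rw [h, matC, Matrix.mul_fin_three, Matrix.one_fin_three]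
  ext i j
  fin_cases i <;> fin_cases j <;>
    simp [Matrix.vecHead, Matrix.vecTail] <;> nlinarith [sin_sq_add_cos_sq 1]

lemma rz_det (θ : ℝ) : (rz θ).det = 1 := by
  rw [rz, Matrix.det_fin_three]; simp; nlinarith [sin_sq_add_cos_sq θ]
lemma ry_det (θ : ℝ) : (ry θ).det = 1 := by
  rw [ry, Matrix.det_fin_three]; simp; nlinarith [sin_sq_add_cos_sq θ]
lemma matA_det : matA.det = 1 := by rw [matA, Matrix.det_fin_three]; simp [Matrix.vecHead, Matrix.vecTail]
lemma matB_det : matB.det = 1 := by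
  rw [matB, Matrix.det_fin_three]; simp; nlinarith [sin_sq_add_cos_sq 1]
lemma matC_det : matC.det = 1 := by
  rw [matC, Matrix.det_fin_three]; simp; nlinarith [sin_sq_add_cos_sq 1]

set_option maxHeartbeats 2000000 in
def mkSO3 (M : M3) (h1 : M ∈ Matrix.orthogonalGroup (Fin 3) ℝ) (h2 : M.det = 1) : SO3 :=
  ⟨⟨M, h1⟩, by
    show ⟨M, h1⟩ ∈ MonoidHom.ker
      (Matrix.detMonoidHom.comp (Submonoid.subtype (Matrix.orthogonalGroup (Fin 3) ℝ)))
    rw [MonoidHom.mem_ker, MonoidHom.comp_apply]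
    simpa using h2⟩

lemma coe2_mul (x y : SO3) : ((x * y : SO3) : Matrix.orthogonalGroup (Fin 3) ℝ).val
    = (x : Matrix.orthogonalGroup (Fin 3) ℝ).val * (y : Matrix.orthogonalGroup (Fin 3) ℝ).val := rfl

lemma coe2_one : ((1 : SO3) : Matrix.orthogonalGroup (Fin 3) ℝ).val = (1 : M3) := rfl

lemma so3_det (x : SO3) : ((x : Matrix.orthogonalGroup (Fin 3) ℝ) : M3).det = 1 := by
  have h : x.1 ∈ MonoidHom.ker
      (Matrix.detMonoidHom.comp (Submonoid.subtype (Matrix.orthogonalGroup (Fin 3) ℝ))) := x.2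
  rw [MonoidHom.mem_ker] at h
  exact h

instance : IsTopologicalGroup SO3 where
  continuous_mul := by
    apply Continuous.subtype_mk
    apply Continuous.subtype_mk
      (f := fun p : SO3 × SO3 => ((p.1 : Matrix.orthogonalGroup (Fin 3) ℝ) : M3)
        * ((p.2 : Matrix.orthogonalGroup (Fin 3) ℝ) : M3))
    exact ((continuous_subtype_val.comp continuous_subtype_val).comp continuous_fst).mul
      ((continuous_subtype_val.comp continuous_subtype_val).comp continuous_snd)
  continuous_inv := by
    apply Continuous.subtype_mk
    apply Continuous.subtype_mk
      (f := fun x : SO3 => star ((x : Matrix.orthogonalGroup (Fin 3) ℝ) : M3))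
    exact (continuous_subtype_val.comp continuous_subtype_val).star

def fz (θ : ℝ) : SO3 := mkSO3 (rz θ) (rz_mem θ) (rz_det θ)
def fy (θ : ℝ) : SO3 := mkSO3 (ry θ) (ry_mem θ) (ry_det θ)

lemma so3_ext {x y : SO3} (h : ((x : Matrix.orthogonalGroup (Fin 3) ℝ) : M3)
    = ((y : Matrix.orthogonalGroup (Fin 3) ℝ) : M3)) : x = y :=
  Subtype.ext (Subtype.ext h)

lemma fz_add (s t : ℝ) : fz (s + t) = fz s * fz t := by
  apply so3_ext
  rw [coe2_mul]
  show rz (s + t) = rz s * rz t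
  rw [rz, rz, rz, Matrix.mul_fin_three]
  ext i j
  fin_cases i <;> fin_cases j <;>
    simp [Matrix.vecHead, Matrix.vecTail, cos_add, sin_add] <;> ring

lemma fy_add (s t : ℝ) : fy (s + t) = fy s * fy t := by
  apply so3_ext
  rw [coe2_mul]
  show ry (s + t) = ry s * ry t
  rw [ry, ry, ry, Matrix.mul_fin_three]
  ext i j
  fin_cases i <;> fin_cases j <;>
    simp [Matrix.vecHead, Matrix.vecTail, cos_add, sin_add] <;> ring

lemma fz_zero : fz 0 = 1 := by
  apply so3_ext
  rw [coe2_one]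
  show rz 0 = 1
  rw [rz, Matrix.one_fin_three]
  norm_num

lemma fy_zero : fy 0 = 1 := by
  apply so3_ext
  rw [coe2_one]
  show ry 0 = 1
  rw [ry, Matrix.one_fin_three]
  norm_num

lemma fz_cont : Continuous fz := by
  apply Continuous.subtype_mk
  apply Continuous.subtype_mk (f := fun θ => rz θ)
  apply continuous_matrix
  intro i j
  fin_cases i <;> fin_cases j <;>
    simp [rz, Matrix.vecHead, Matrix.vecTail] <;> fun_prop

lemma fy_cont : Continuous fy := by
  apply Continuous.subtype_mk
  apply Continuous.subtype_mk (f := fun θ => ry θ)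
  apply continuous_matrix
  intro i j
  fin_cases i <;> fin_cases j <;>
    simp [ry, Matrix.vecHead, Matrix.vecTail] <;> fun_prop

lemma fz_two_pi : fz (2 * π) = 1 := by
  apply so3_ext
  rw [coe2_one]
  show rz (2 * π) = 1
  rw [rz, Matrix.one_fin_three, Real.cos_two_pi, Real.sin_two_pi]
  norm_num

lemma fy_two_pi : fy (2 * π) = 1 := by
  apply so3_ext
  rw [coe2_one]
  show ry (2 * π) = 1
  rw [ry, Matrix.one_fin_three, Real.cos_two_pi, Real.sin_two_pi]
  norm_num

lemma exists_cos_sin {x y : ℝ} (h : x ^ 2 + y ^ 2 = 1) : ∃ θ, cos θ = x ∧ sin θ = y := by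
  have hx1 : -1 ≤ x := by nlinarith
  have hx2 : x ≤ 1 := by nlinarith
  have hsq : 1 - x ^ 2 = y ^ 2 := by nlinarith
  rcases le_or_gt 0 y with hy | hy
  · refine ⟨arccos x, Real.cos_arccos hx1 hx2, ?_⟩
    rw [Real.sin_arccos, hsq, Real.sqrt_sq hy]
  · refine ⟨-arccos x, ?_, ?_⟩
    · rw [Real.cos_neg]; exact Real.cos_arccos hx1 hx2
    · rw [Real.sin_neg, Real.sin_arccos, hsq, Real.sqrt_sq_eq_abs, abs_of_neg hy]; ring

set_option maxHeartbeats 4000000 in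
lemma fix_e3 (h : M3) (h2 : h * hᵀ = 1) (h1 : hᵀ * h = 1) (hdet : h.det = 1)
    (c0 : h 0 2 = 0) (c1 : h 1 2 = 0) (c2 : h 2 2 = 1) : ∃ γ, h = rz γ := by
  have e22 : h 2 0 * h 2 0 + h 2 1 * h 2 1 + h 2 2 * h 2 2 = 1 := by
    have := congrFun (congrFun h2 2) 2
    simpa [Matrix.mul_apply, Fin.sum_univ_three, Matrix.one_apply] using this
  have hr0 : h 2 0 = 0 := by nlinarith [sq_nonneg (h 2 0), sq_nonneg (h 2 1)]
  have hr1 : h 2 1 = 0 := by nlinarith [sq_nonneg (h 2 0), sq_nonneg (h 2 1)]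
  have e00 : h 0 0 * h 0 0 + h 1 0 * h 1 0 + h 2 0 * h 2 0 = 1 := by
    have := congrFun (congrFun h1 0) 0
    simpa [Matrix.mul_apply, Fin.sum_univ_three, Matrix.one_apply] using this
  have e01 : h 0 0 * h 0 1 + h 1 0 * h 1 1 + h 2 0 * h 2 1 = 0 := by
    have := congrFun (congrFun h1 0) 1
    simpa [Matrix.mul_apply, Fin.sum_univ_three, Matrix.one_apply] using this
  have e11 : h 0 1 * h 0 1 + h 1 1 * h 1 1 + h 2 1 * h 2 1 = 1 := by
    have := congrFun (congrFun h1 1) 1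
    simpa [Matrix.mul_apply, Fin.sum_univ_three, Matrix.one_apply] using this
  have hd : h 0 0 * h 1 1 - h 0 1 * h 1 0 = 1 := by
    rw [Matrix.det_fin_three] at hdet
    rw [c0, c1, c2, hr0, hr1] at hdet
    linarith [hdet]
  have hkey : (h 1 1 - h 0 0) ^ 2 + (h 0 1 + h 1 0) ^ 2 = 0 := by nlinarith
  have hs : h 1 1 = h 0 0 := by nlinarith [sq_nonneg (h 1 1 - h 0 0), sq_nonneg (h 0 1 + h 1 0)]
  have hq : h 0 1 = -h 1 0 := by nlinarith [sq_nonneg (h 1 1 - h 0 0), sq_nonneg (h 0 1 + h 1 0)]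
  obtain ⟨γ, hcos, hsin⟩ := exists_cos_sin (x := h 0 0) (y := h 1 0) (by nlinarith)
  refine ⟨γ, ?_⟩
  ext i j
  fin_cases i <;> fin_cases j <;>
    simp [rz, Matrix.vecHead, Matrix.vecTail, hcos, hsin] <;>
    first
      | rfl
      | exact c0 | exact c1 | exact c2 | exact hr0 | exact hr1
      | exact hq | exact hs | linarith [hq] | linarith [hs]

lemma orth_mul_t {M : M3} (h : M ∈ Matrix.orthogonalGroup (Fin 3) ℝ) :
    M * Mᵀ = 1 ∧ Mᵀ * M = 1 := by
  constructor
  · have := (Matrix.mem_orthogonalGroup_iff (Fin 3) ℝ).1 h; exact this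
  · have := (Matrix.mem_orthogonalGroup_iff' (Fin 3) ℝ).1 h; exact this

lemma conj_orth (Q g : M3) (hQ1 : Q * Qᵀ = 1) (hQ2 : Qᵀ * Q = 1)
    (hg1 : g * gᵀ = 1) (hg2 : gᵀ * g = 1) :
    Qᵀ * g * (Qᵀ * g)ᵀ = 1 ∧ (Qᵀ * g)ᵀ * (Qᵀ * g) = 1 := by
  constructor
  · rw [Matrix.transpose_mul, Matrix.transpose_transpose, Matrix.mul_assoc,
      ← Matrix.mul_assoc g gᵀ Q, hg1, Matrix.one_mul, hQ2]
  · rw [Matrix.transpose_mul, Matrix.transpose_transpose, Matrix.mul_assoc,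
      ← Matrix.mul_assoc Q Qᵀ g, hQ1, Matrix.one_mul, hg2]

set_option maxHeartbeats 4000000 in
lemma euler (g : M3) (hg : g ∈ Matrix.orthogonalGroup (Fin 3) ℝ) (hdet : g.det = 1) :
    ∃ α β γ, g = rz α * ry β * rz γ := by
  obtain ⟨hgt, htg⟩ := orth_mul_t hg
  have hv : g 0 2 ^ 2 + g 1 2 ^ 2 + g 2 2 ^ 2 = 1 := by
    have := congrFun (congrFun htg 2) 2
    simp [Matrix.mul_apply, Fin.sum_univ_three, Matrix.one_apply] at this
    nlinarith [this]
  set β := arccos (g 2 2) with hβ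
  have hcb : cos β = g 2 2 := Real.cos_arccos (by nlinarith) (by nlinarith)
  have hsbnn : 0 ≤ sin β := Real.sin_nonneg_of_mem_Icc ⟨Real.arccos_nonneg _, Real.arccos_le_pi _⟩
  have hcb2 : cos β ^ 2 = g 2 2 ^ 2 := by rw [hcb]
  have hsb2 : sin β ^ 2 = g 0 2 ^ 2 + g 1 2 ^ 2 := by
    have := sin_sq_add_cos_sq β
    linarith
  obtain ⟨α, hca, hsa⟩ : ∃ α, cos α * sin β = g 0 2 ∧ sin α * sin β = g 1 2 := by
    by_cases hs0 : sin β = 0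
    · refine ⟨0, ?_, ?_⟩ <;> rw [hs0, mul_zero] <;>
        nlinarith [hsb2, sq_nonneg (g 0 2), sq_nonneg (g 1 2)]
    · have hspos : 0 < sin β := lt_of_le_of_ne hsbnn (Ne.symm hs0)
      obtain ⟨α, h1, h2⟩ := exists_cos_sin (x := g 0 2 / sin β) (y := g 1 2 / sin β)
        (by field_simp; nlinarith [hsb2])
      exact ⟨α, by rw [h1]; field_simp, by rw [h2]; field_simp⟩
  obtain ⟨E, hEdef⟩ : ∃ E : M3, E = rz α * ry β := ⟨_, rfl⟩
  have hE : E = !![cos α * cos β, -sin α, cos α * sin β;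
      sin α * cos β, cos α, sin α * sin β; -sin β, 0, cos β] := by
    rw [hEdef, rz, ry, Matrix.mul_fin_three]
    ext i j
    fin_cases i <;> fin_cases j <;> simp [Matrix.vecHead, Matrix.vecTail] <;> ring
  have hEt : E * Eᵀ = 1 ∧ Eᵀ * E = 1 := by
    apply orth_mul_t
    rw [hEdef]
    exact mul_mem (rz_mem α) (ry_mem β)
  obtain ⟨h, hhdef⟩ : ∃ h : M3, h = Eᵀ * g := ⟨_, rfl⟩
  have c0 : h 0 2 = 0 := by
    rw [hhdef, hE]
    simp [Matrix.mul_apply, Fin.sum_univ_three, Matrix.transpose_apply,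
      Matrix.vecHead, Matrix.vecTail]
    linear_combination (-(cos α * cos β)) * hca - (sin α * cos β) * hsa + sin β * hcb +
      (cos β * sin β) * sin_sq_add_cos_sq α
  have c1 : h 1 2 = 0 := by
    rw [hhdef, hE]
    simp [Matrix.mul_apply, Fin.sum_univ_three, Matrix.transpose_apply,
      Matrix.vecHead, Matrix.vecTail]
    linear_combination sin α * hca - cos α * hsa
  have c2 : h 2 2 = 1 := by
    rw [hhdef, hE]
    simp [Matrix.mul_apply, Fin.sum_univ_three, Matrix.transpose_apply,
      Matrix.vecHead, Matrix.vecTail]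
    linear_combination (-(cos α * sin β)) * hca - (sin α * sin β) * hsa - cos β * hcb +
      (sin β ^ 2) * sin_sq_add_cos_sq α + sin_sq_add_cos_sq β
  have hho := conj_orth E g hEt.1 hEt.2 hgt htg
  have hhdet : h.det = 1 := by
    rw [hhdef, Matrix.det_mul, Matrix.det_transpose, hEdef, Matrix.det_mul,
      rz_det, ry_det, hdet]
    norm_num
  rw [← hhdef] at hho
  obtain ⟨γ, hγ⟩ := fix_e3 h hho.1 hho.2 hhdet c0 c1 c2
  refine ⟨α, β, γ, ?_⟩
  have hEg : E * Eᵀ * g = g := by rw [hEt.1, Matrix.one_mul]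
  rw [← hEg, Matrix.mul_assoc, ← hhdef, hγ, hEdef]

def elA : SO3 := mkSO3 matA matA_mem matA_det
def elB : SO3 := mkSO3 matB matB_mem matB_det
def elC : SO3 := mkSO3 matC matC_mem matC_det

lemma elA_mul_elB : elA * elB = fz (-1) := by
  apply so3_ext
  rw [coe2_mul]
  show matA * matB = rz (-1)
  rw [matA, matB, rz, Matrix.mul_fin_three, Real.cos_neg, Real.sin_neg]
  ext i j
  fin_cases i <;> fin_cases j <;> simp [Matrix.vecHead, Matrix.vecTail]

lemma elA_mul_elC : elA * elC = fy 1 := by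
  apply so3_ext
  rw [coe2_mul]
  show matA * matC = ry 1
  rw [matA, matC, ry, Matrix.mul_fin_three]
  ext i j
  fin_cases i <;> fin_cases j <;> simp [Matrix.vecHead, Matrix.vecTail]

lemma dense_aux (H : Subgroup SO3) (hHc : IsClosed (H : Set SO3)) (f : ℝ → SO3)
    (hf : Continuous f) (hadd : ∀ s t, f (s + t) = f s * f t) (hf0 : f 0 = 1)
    (h1 : f 1 ∈ H) (h2 : f (2 * π) = 1) : ∀ θ, f θ ∈ H := by
  have hneg : ∀ t, f (-t) = (f t)⁻¹ := by
    intro t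
    have h : f (-t) * f t = 1 := by rw [← hadd]; simpa using hf0
    exact eq_inv_of_mul_eq_one_left h
  set T : AddSubgroup ℝ :=
    { carrier := f ⁻¹' ↑H
      zero_mem' := by show f 0 ∈ ↑H; rw [hf0]; exact one_mem H
      add_mem' := by intro x y hx hy; simp only [Set.mem_preimage] at *; rw [hadd]; exact mul_mem hx hy
      neg_mem' := by intro x hx; simp only [Set.mem_preimage] at *; rw [hneg]; exact inv_mem hx }
    with hT
  have hTc : IsClosed (T : Set ℝ) := hHc.preimage hf
  have h1T : (1 : ℝ) ∈ T := h1
  have h2T : 2 * π ∈ T := by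
    show f (2 * π) ∈ H
    rw [h2]; exact one_mem H
  rcases AddSubgroup.dense_or_cyclic T with hd | ⟨u, hu⟩
  · have : (T : Set ℝ) = Set.univ := by rw [← hTc.closure_eq]; exact hd.closure_eq
    intro θ
    have : θ ∈ (T : Set ℝ) := this ▸ Set.mem_univ θ
    exact this
  · exfalso
    rw [hu, AddSubgroup.mem_closure_singleton] at h1T h2T
    obtain ⟨n, hn⟩ := h1T
    obtain ⟨m, hm⟩ := h2T
    have hn0 : (n : ℝ) * u = 1 := by rw [← hn]; simp [zsmul_eq_mul]
    have hm0 : (m : ℝ) * u = 2 * π := by rw [← hm]; simp [zsmul_eq_mul]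
    have hnne : (n : ℝ) ≠ 0 := by
      intro h; rw [h, zero_mul] at hn0; exact one_ne_zero hn0.symm
    have : π = ((m : ℝ) / (2 * n)) := by
      field_simp
      linear_combination (m : ℝ) * hn0 - (n : ℝ) * hm0
    have : π = ((m / (2 * n) : ℚ) : ℝ) := by
      push_cast
      rw [this]
    exact irrational_pi ⟨(m / (2 * n) : ℚ), this.symm⟩

lemma main_dense :
    closure ((Subgroup.closure ({elA, elB, elC} : Set SO3) : Subgroup SO3) : Set SO3) =
      Set.univ := by
  set S := Subgroup.closure ({elA, elB, elC} : Set SO3) with hS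
  set H := S.topologicalClosure with hH
  have hHc : IsClosed (H : Set SO3) := S.isClosed_topologicalClosure
  have hcoe : (H : Set SO3) = closure (S : Set SO3) := rfl
  have hmem : ∀ x ∈ ({elA, elB, elC} : Set SO3), x ∈ H := by
    intro x hx
    exact S.le_topologicalClosure (Subgroup.subset_closure hx)
  have hA : elA ∈ H := hmem elA (by simp)
  have hB : elB ∈ H := hmem elB (by simp)
  have hC : elC ∈ H := hmem elC (by simp)
  have hfz1 : fz 1 ∈ H := by
    have : fz (-1) ∈ H := elA_mul_elB ▸ mul_mem hA hB
    have h2 : fz 1 = (fz (-1))⁻¹ := by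
      apply eq_inv_of_mul_eq_one_left
      rw [← fz_add]
      simpa using fz_zero
    rw [h2]
    exact inv_mem this
  have hfy1 : fy 1 ∈ H := elA_mul_elC ▸ mul_mem hA hC
  have hz : ∀ θ, fz θ ∈ H := dense_aux H hHc fz fz_cont fz_add fz_zero hfz1 fz_two_pi
  have hy : ∀ θ, fy θ ∈ H := dense_aux H hHc fy fy_cont fy_add fy_zero hfy1 fy_two_pi
  rw [← hcoe]
  rw [Set.eq_univ_iff_forall]
  intro g
  obtain ⟨α, β, γ, hαβγ⟩ := euler ((g : Matrix.orthogonalGroup (Fin 3) ℝ) : M3)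
    (g : Matrix.orthogonalGroup (Fin 3) ℝ).2 (so3_det g)
  have : g = fz α * fy β * fz γ := by
    apply so3_ext
    rw [coe2_mul, coe2_mul]
    exact hαβγ
  rw [this]
  exact mul_mem (mul_mem (hz α) (hy β)) (hz γ)

lemma not_dense_pair (x y : SO3) (n : Fin 3 → ℝ) (w : SO3)
    (hx : Matrix.mulVec ((x : Matrix.orthogonalGroup (Fin 3) ℝ) : M3) n = -n)
    (hy : Matrix.mulVec ((y : Matrix.orthogonalGroup (Fin 3) ℝ) : M3) n = -n)
    (hw1 : Matrix.mulVec ((w : Matrix.orthogonalGroup (Fin 3) ℝ) : M3) n ≠ n)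
    (hw2 : Matrix.mulVec ((w : Matrix.orthogonalGroup (Fin 3) ℝ) : M3) n ≠ -n) :
    closure ((Subgroup.closure ({x, y} : Set SO3) : Subgroup SO3) : Set SO3) ≠ Set.univ := by
  set mv : SO3 → (Fin 3 → ℝ) := fun g => Matrix.mulVec ((g : Matrix.orthogonalGroup (Fin 3) ℝ) : M3) n with hmv
  have hmv_mul : ∀ g h : SO3, mv (g * h) = Matrix.mulVec ((g : Matrix.orthogonalGroup (Fin 3) ℝ) : M3) (mv h) := by
    intro g h
    rw [hmv]
    simp only [coe2_mul]
    rw [← Matrix.mulVec_mulVec]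
  have hmv_cont : Continuous mv := by
    apply Continuous.matrix_mulVec
    · exact continuous_subtype_val.comp continuous_subtype_val
    · exact continuous_const
  set K : Subgroup SO3 :=
    { carrier := {g : SO3 | mv g = n ∨ mv g = -n}
      one_mem' := by left; show mv 1 = n; rw [hmv]; simp [coe2_one]
      mul_mem' := by
        rintro g h (hg | hg) (hh | hh)
        · left; rw [hmv_mul, hh]; exact hg
        · right; rw [hmv_mul, hh, Matrix.mulVec_neg]
          exact congrArg (fun v => -v) hg
        · right; rw [hmv_mul, hh]; exact hg
        · left; rw [hmv_mul, hh, Matrix.mulVec_neg,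
            show (((g : Matrix.orthogonalGroup (Fin 3) ℝ) : M3) *ᵥ n) = -n from hg, neg_neg]
      inv_mem' := by
        rintro g (hg | hg)
        · left
          have : mv (g⁻¹ * g) = n := by rw [inv_mul_cancel]; show mv 1 = n; rw [hmv]; simp [coe2_one]
          rw [hmv_mul, hg] at this
          exact this
        · right
          have : mv (g⁻¹ * g) = n := by rw [inv_mul_cancel]; show mv 1 = n; rw [hmv]; simp [coe2_one]
          rw [hmv_mul, hg, Matrix.mulVec_neg] at this
          exact neg_eq_iff_eq_neg.1 this } with hK
  have hKc : IsClosed (K : Set SO3) := by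
    have : (K : Set SO3) = {g : SO3 | mv g = n} ∪ {g : SO3 | mv g = -n} := rfl
    rw [this]
    exact (isClosed_eq hmv_cont continuous_const).union (isClosed_eq hmv_cont continuous_const)
  have hle : Subgroup.closure ({x, y} : Set SO3) ≤ K := by
    apply (Subgroup.closure_le K).2
    rintro g (rfl | rfl)
    · right; exact hx
    · right; exact hy
  intro huniv
  have hwK : w ∈ (K : Set SO3) := by
    have : closure ((Subgroup.closure ({x, y} : Set SO3) : Subgroup SO3) : Set SO3) ⊆ (K : Set SO3) := by
      rw [← hKc.closure_eq]
      exact closure_mono hle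
    exact this (huniv ▸ Set.mem_univ w)
  rcases hwK with h | h
  · exact hw1 h
  · exact hw2 h

lemma sin1_pos : 0 < sin 1 := Real.sin_pos_of_pos_of_lt_pi one_pos (by linarith [Real.pi_gt_three])
lemma cos1_lt_one : cos 1 < 1 := by
  have := Real.cos_lt_cos_of_nonneg_of_le_pi (x := 0) (y := 1) le_rfl
    (by linarith [Real.pi_gt_three]) one_pos
  simpa using this
lemma cos1_pos : 0 < cos 1 :=
  Real.cos_pos_of_mem_Ioo ⟨by linarith [Real.pi_gt_three], by linarith [Real.pi_gt_three]⟩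

lemma mulvec_matA_e3 : Matrix.mulVec matA ![0,0,1] = -![(0:ℝ),0,1] := by
  funext i
  fin_cases i <;>
    simp [matA, Matrix.mulVec, dotProduct, Fin.sum_univ_three, Matrix.vecHead, Matrix.vecTail]

lemma mulvec_matB_e3 : Matrix.mulVec matB ![0,0,1] = -![(0:ℝ),0,1] := by
  funext i
  fin_cases i <;>
    simp [matB, Matrix.mulVec, dotProduct, Fin.sum_univ_three, Matrix.vecHead, Matrix.vecTail]

lemma mulvec_matA_e2 : Matrix.mulVec matA ![0,1,0] = -![(0:ℝ),1,0] := by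
  funext i
  fin_cases i <;>
    simp [matA, Matrix.mulVec, dotProduct, Fin.sum_univ_three, Matrix.vecHead, Matrix.vecTail]

lemma mulvec_matC_e2 : Matrix.mulVec matC ![0,1,0] = -![(0:ℝ),1,0] := by
  funext i
  fin_cases i <;>
    simp [matC, Matrix.mulVec, dotProduct, Fin.sum_univ_three, Matrix.vecHead, Matrix.vecTail]

lemma mulvec_matB_n : Matrix.mulVec matB ![1 - cos 1, -sin 1, -sin 1] = -![1 - cos 1, -sin 1, -sin 1] := by
  funext i
  fin_cases i <;>
    simp [matB, Matrix.mulVec, dotProduct, Fin.sum_univ_three, Matrix.vecHead, Matrix.vecTail] <;>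
    nlinarith [sin_sq_add_cos_sq 1]

lemma mulvec_matC_n : Matrix.mulVec matC ![1 - cos 1, -sin 1, -sin 1] = -![1 - cos 1, -sin 1, -sin 1] := by
  funext i
  fin_cases i <;>
    simp [matC, Matrix.mulVec, dotProduct, Fin.sum_univ_three, Matrix.vecHead, Matrix.vecTail] <;>
    nlinarith [sin_sq_add_cos_sq 1]

lemma mulvec_matA_n : Matrix.mulVec matA ![1 - cos 1, -sin 1, -sin 1] = ![1 - cos 1, sin 1, sin 1] := by
  funext i
  fin_cases i <;>
    simp [matA, Matrix.mulVec, dotProduct, Fin.sum_univ_three, Matrix.vecHead, Matrix.vecTail]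

lemma not_dense_ab :
    closure ((Subgroup.closure ({elA, elB} : Set SO3) : Subgroup SO3) : Set SO3) ≠ Set.univ := by
  apply not_dense_pair elA elB ![0,0,1] (fy 1)
  · exact mulvec_matA_e3
  · exact mulvec_matB_e3
  · show Matrix.mulVec (ry 1) ![0,0,1] ≠ ![0,0,1]
    intro h
    have := congrFun h 0
    simp [ry, Matrix.mulVec, dotProduct, Fin.sum_univ_three, Matrix.vecHead, Matrix.vecTail] at this
    exact (ne_of_gt sin1_pos) this
  · show Matrix.mulVec (ry 1) ![0,0,1] ≠ -![0,0,1]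
    intro h
    have := congrFun h 0
    simp [ry, Matrix.mulVec, dotProduct, Fin.sum_univ_three, Matrix.vecHead, Matrix.vecTail] at this
    exact (ne_of_gt sin1_pos) this

lemma not_dense_ac :
    closure ((Subgroup.closure ({elA, elC} : Set SO3) : Subgroup SO3) : Set SO3) ≠ Set.univ := by
  apply not_dense_pair elA elC ![0,1,0] (fz (-1))
  · exact mulvec_matA_e2
  · exact mulvec_matC_e2
  · show Matrix.mulVec (rz (-1)) ![0,1,0] ≠ ![0,1,0]
    intro h
    have := congrFun h 0
    simp [rz, Matrix.mulVec, dotProduct, Fin.sum_univ_three, Matrix.vecHead, Matrix.vecTail] at this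
    exact (ne_of_gt sin1_pos) this
  · show Matrix.mulVec (rz (-1)) ![0,1,0] ≠ -![0,1,0]
    intro h
    have := congrFun h 0
    simp [rz, Matrix.mulVec, dotProduct, Fin.sum_univ_three, Matrix.vecHead, Matrix.vecTail] at this
    exact (ne_of_gt sin1_pos) this

lemma not_dense_bc :
    closure ((Subgroup.closure ({elB, elC} : Set SO3) : Subgroup SO3) : Set SO3) ≠ Set.univ := by
  apply not_dense_pair elB elC ![1 - cos 1, -sin 1, -sin 1] elA
  · exact mulvec_matB_n
  · exact mulvec_matC_n
  · show Matrix.mulVec matA ![1 - cos 1, -sin 1, -sin 1] ≠ ![1 - cos 1, -sin 1, -sin 1]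
    rw [mulvec_matA_n]
    intro h
    have := congrFun h 1
    simp at this
    nlinarith [sin1_pos, this]
  · show Matrix.mulVec matA ![1 - cos 1, -sin 1, -sin 1] ≠ -![1 - cos 1, -sin 1, -sin 1]
    rw [mulvec_matA_n]
    intro h
    have := congrFun h 0
    simp at this
    nlinarith [cos1_lt_one, this]

lemma coe2_eq_matA : ((elA : Matrix.orthogonalGroup (Fin 3) ℝ) : M3) = matA := rfl
lemma coe2_eq_matB : ((elB : Matrix.orthogonalGroup (Fin 3) ℝ) : M3) = matB := rfl
lemma coe2_eq_matC : ((elC : Matrix.orthogonalGroup (Fin 3) ℝ) : M3) = matC := rfl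

lemma elA_sq : elA ^ 2 = 1 := by
  apply so3_ext
  rw [pow_two, coe2_mul, coe2_one]
  show matA * matA = 1
  rw [matA, Matrix.mul_fin_three, Matrix.one_fin_three]
  norm_num

lemma elB_sq : elB ^ 2 = 1 := by
  apply so3_ext
  rw [pow_two, coe2_mul, coe2_one]
  show matB * matB = 1
  rw [matB, Matrix.mul_fin_three, Matrix.one_fin_three]
  ext i j
  fin_cases i <;> fin_cases j <;> simp [Matrix.vecHead, Matrix.vecTail] <;>
    nlinarith [sin_sq_add_cos_sq 1]

lemma elC_sq : elC ^ 2 = 1 := by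
  apply so3_ext
  rw [pow_two, coe2_mul, coe2_one]
  show matC * matC = 1
  rw [matC, Matrix.mul_fin_three, Matrix.one_fin_three]
  ext i j
  fin_cases i <;> fin_cases j <;> simp [Matrix.vecHead, Matrix.vecTail] <;>
    nlinarith [sin_sq_add_cos_sq 1]

lemma mat_of_eq {x y : SO3} (h : x = y) :
    ((x : Matrix.orthogonalGroup (Fin 3) ℝ) : M3) = ((y : Matrix.orthogonalGroup (Fin 3) ℝ) : M3) := by
  rw [h]

lemma elA_ne_one : elA ≠ 1 := by
  intro h
  have hm : matA = (1 : M3) := by rw [← coe2_eq_matA, ← coe2_one]; exact mat_of_eq h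
  have := congrFun (congrFun hm 1) 1
  simp [matA, Matrix.one_apply] at this
  norm_num at this

lemma elB_ne_one : elB ≠ 1 := by
  intro h
  have hm : matB = (1 : M3) := by rw [← coe2_eq_matB, ← coe2_one]; exact mat_of_eq h
  have := congrFun (congrFun hm 1) 1
  simp [matB, Matrix.one_apply, Matrix.vecHead, Matrix.vecTail] at this
  nlinarith [cos1_pos, this]

lemma elC_ne_one : elC ≠ 1 := by
  intro h
  have hm : matC = (1 : M3) := by rw [← coe2_eq_matC, ← coe2_one]; exact mat_of_eq h
  have := congrFun (congrFun hm 1) 1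
  simp [matC, Matrix.one_apply, Matrix.vecHead, Matrix.vecTail] at this
  norm_num at this

lemma elA_ne_elB : elA ≠ elB := by
  intro h
  have hm : matA = matB := by rw [← coe2_eq_matA, ← coe2_eq_matB]; exact mat_of_eq h
  have := congrFun (congrFun hm 0) 0
  simp [matA, matB] at this
  nlinarith [cos1_lt_one, this]

lemma elA_ne_elC : elA ≠ elC := by
  intro h
  have hm : matA = matC := by rw [← coe2_eq_matA, ← coe2_eq_matC]; exact mat_of_eq h
  have := congrFun (congrFun hm 0) 0
  simp [matA, matC] at this
  nlinarith [cos1_lt_one, this]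

lemma elB_ne_elC : elB ≠ elC := by
  intro h
  have hm : matB = matC := by rw [← coe2_eq_matB, ← coe2_eq_matC]; exact mat_of_eq h
  have := congrFun (congrFun hm 1) 1
  simp [matB, matC, Matrix.vecHead, Matrix.vecTail] at this
  exact absurd this (ne_of_lt cos1_lt_one)

lemma topgen_mono {s t : Set SO3} (h : s ⊆ t)
    (hs : closure ((Subgroup.closure s : Subgroup SO3) : Set SO3) = Set.univ) :
    closure ((Subgroup.closure t : Subgroup SO3) : Set SO3) = Set.univ := by
  apply Set.eq_univ_of_univ_subset
  rw [← hs]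
  exact closure_mono (SetLike.coe_subset_coe.2 (Subgroup.closure_mono h))

lemma irred : IrredGen SO3 ({elA, elB, elC} : Finset SO3) := by
  constructor
  · show closure _ = Set.univ
    have hXcoe : ((({elA, elB, elC} : Finset SO3) : Set SO3)) = ({elA, elB, elC} : Set SO3) := by
      simp
    rw [hXcoe]
    exact main_dense
  · intro Y hY hTop
    have hTop' : closure ((Subgroup.closure ((Y : Set SO3)) : Subgroup SO3) : Set SO3) = Set.univ := hTop
    obtain ⟨z, hzX, hzY⟩ := Finset.exists_of_ssubset hY
    have hYX : ∀ g ∈ Y, g = elA ∨ g = elB ∨ g = elC := by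
      intro g hg
      have := hY.subset hg
      simpa [Finset.mem_insert, Finset.mem_singleton] using this
    rcases (by simpa [Finset.mem_insert, Finset.mem_singleton] using hzX :
        z = elA ∨ z = elB ∨ z = elC) with rfl | rfl | rfl
    · have hsub : (Y : Set SO3) ⊆ ({elB, elC} : Set SO3) := by
        intro g hg
        rcases hYX g hg with rfl | rfl | rfl
        · exact absurd hg hzY
        · exact Or.inl rfl
        · exact Or.inr rfl
      exact not_dense_bc (topgen_mono hsub hTop')
    · have hsub : (Y : Set SO3) ⊆ ({elA, elC} : Set SO3) := by
        intro g hg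
        rcases hYX g hg with rfl | rfl | rfl
        · exact Or.inl rfl
        · exact absurd hg hzY
        · exact Or.inr rfl
      exact not_dense_ac (topgen_mono hsub hTop')
    · have hsub : (Y : Set SO3) ⊆ ({elA, elB} : Set SO3) := by
        intro g hg
        rcases hYX g hg with rfl | rfl | rfl
        · exact Or.inl rfl
        · exact Or.inr rfl
        · exact absurd hg hzY
      exact not_dense_ab (topgen_mono hsub hTop')


/-- There are three involutions topologically generating `SO(3)` irredundantly:
no two of them topologically generate. Hence `m(SO(3)) ≥ 3`. -/
theorem stmt8 :
    (∃ a b c : SO3, a ^ 2 = 1 ∧ a ≠ 1 ∧ b ^ 2 = 1 ∧ b ≠ 1 ∧ c ^ 2 = 1 ∧ c ≠ 1 ∧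
      closure ((Subgroup.closure ({a, b, c} : Set SO3) : Subgroup SO3) : Set SO3) =
        Set.univ ∧
      closure ((Subgroup.closure ({a, b} : Set SO3) : Subgroup SO3) : Set SO3) ≠
        Set.univ ∧
      closure ((Subgroup.closure ({a, c} : Set SO3) : Subgroup SO3) : Set SO3) ≠
        Set.univ ∧
      closure ((Subgroup.closure ({b, c} : Set SO3) : Subgroup SO3) : Set SO3) ≠
        Set.univ) ∧
    3 ≤ mRank SO3 := by
  constructor
  · exact ⟨elA, elB, elC, elA_sq, elA_ne_one, elB_sq, elB_ne_one, elC_sq, elC_ne_one,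
      main_dense, not_dense_ab, not_dense_ac, not_dense_bc⟩
  · apply le_sSup
    refine ⟨({elA, elB, elC} : Finset SO3), irred, ?_⟩
    have : ({elA, elB, elC} : Finset SO3).card = 3 :=
      Finset.card_eq_three.2 ⟨elA, elB, elC, elA_ne_elB, elA_ne_elC, elB_ne_elC, rfl⟩
    rw [this]
    rfl

end
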